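/- arXiv:2201.00165 — 2 statements merged into one kernel-verified Lean document; each statement's English description precedes it below -/
import Mathlib

section
/- Let A be an n×n 0/1 matrix with r_i ones in row i. Then Per(A) ≤ ∏_{i=1}^n (r_i!)^{1/r_i}. -/
open Finset

/-- The permanent of a square matrix with natural number entries. -/
def permanent {n : ℕ} (A : Matrix (Fin n) (Fin n) ℕ) : ℕ :=
  ∑ σ : Equiv.Perm (Fin n), ∏ i, A i (σ i)

/-! ### Auxiliary definitions for Schrijver's proof of Brégman's theorem -/

/-- The set of permutations hitting only `1` entries. -/
def bregS {n : ℕ} (A : Matrix (Fin n) (Fin n) ℕ) : Finset (Equiv.Perm (Fin n)) :=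
  univ.filter fun σ => ∀ j, A j (σ j) = 1

/-- The fiber count: permutations in `bregS A` sending `i` to `k`. -/
def bregN {n : ℕ} (A : Matrix (Fin n) (Fin n) ℕ) (i k : Fin n) : ℕ :=
  ((bregS A).filter fun σ => σ i = k).card

/-- Row sums of minors. -/
def bregU {n : ℕ} (A : Matrix (Fin n) (Fin n) ℕ) (j k : Fin n) : ℕ :=
  if A j k = 1 then (∑ l, A j l) - 1 else (∑ l, A j l)

/-- `(1/r) log (r!)`, with the convention that it is `0` at `r = 0`. -/
noncomputable def bregW (r : ℕ) : ℝ := Real.log (Nat.factorial r) / r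

lemma permanent_eq_card {n : ℕ} (A : Matrix (Fin n) (Fin n) ℕ)
    (h01 : ∀ i j, A i j = 0 ∨ A i j = 1) :
    permanent A = (bregS A).card := by
  rw [bregS, Finset.card_filter, permanent]
  refine Finset.sum_congr rfl fun σ _ => ?_
  by_cases h : ∀ j, A j (σ j) = 1
  · rw [if_pos h]
    exact Finset.prod_eq_one fun i _ => h i
  · rw [if_neg h]
    push_neg at h
    obtain ⟨j, hj⟩ := h
    exact Finset.prod_eq_zero (mem_univ j) ((h01 j (σ j)).resolve_right hj)

lemma rowsum_eq_card {n : ℕ} (A : Matrix (Fin n) (Fin n) ℕ)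
    (h01 : ∀ i j, A i j = 0 ∨ A i j = 1) (i : Fin n) :
    (∑ j, A i j) = (univ.filter fun k => A i k = 1).card := by
  rw [Finset.card_filter]
  refine Finset.sum_congr rfl fun k _ => ?_
  rcases h01 i k with h | h <;> simp [h]

def bregMinor {m : ℕ} (A : Matrix (Fin (m+1)) (Fin (m+1)) ℕ) (i k : Fin (m+1)) :
    Matrix (Fin m) (Fin m) ℕ := A.submatrix i.succAbove k.succAbove

def bregOpt {m : ℕ} (i k : Fin (m+1)) (σ : Equiv.Perm (Fin (m+1))) :
    Option (Fin m) ≃ Option (Fin m) :=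
  ((finSuccEquiv' i).symm.trans (σ.trans (finSuccEquiv' k)))

def bregF {m : ℕ} (i k : Fin (m+1)) (σ : Equiv.Perm (Fin (m+1))) : Equiv.Perm (Fin m) :=
  Equiv.removeNone (bregOpt i k σ)

def bregG {m : ℕ} (i k : Fin (m+1)) (τ : Equiv.Perm (Fin m)) : Equiv.Perm (Fin (m+1)) :=
  (finSuccEquiv' i).trans ((Equiv.optionCongr τ).trans (finSuccEquiv' k).symm)

lemma bregF_spec {m : ℕ} (i k : Fin (m+1)) (σ : Equiv.Perm (Fin (m+1)))
    (hσ : σ i = k) (j : Fin m) :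
    σ (i.succAbove j) = k.succAbove (bregF i k σ j) := by
  have h0 : bregOpt i k σ none = none := by
    simp [bregOpt, finSuccEquiv'_symm_none, hσ, finSuccEquiv'_at]
  have hne : ∃ x', bregOpt i k σ (some j) = some x' := by
    rcases h' : bregOpt i k σ (some j) with _ | x'
    · exact absurd ((bregOpt i k σ).injective (h'.trans h0.symm)) (by simp)
    · exact ⟨x', rfl⟩
  have h2 := Equiv.removeNone_some _ hne
  have h3 : bregOpt i k σ (some j) = finSuccEquiv' k (σ (i.succAbove j)) := by
    simp [bregOpt, finSuccEquiv'_symm_some]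
  rw [h3] at h2
  have := congrArg (finSuccEquiv' k).symm h2
  rw [Equiv.symm_apply_apply, finSuccEquiv'_symm_some] at this
  exact this.symm

lemma bregG_at {m : ℕ} (i k : Fin (m+1)) (τ : Equiv.Perm (Fin m)) : bregG i k τ i = k := by
  simp [bregG, finSuccEquiv'_at, finSuccEquiv'_symm_none]

lemma bregG_succAbove {m : ℕ} (i k : Fin (m+1)) (τ : Equiv.Perm (Fin m)) (j : Fin m) :
    bregG i k τ (i.succAbove j) = k.succAbove (τ j) := by
  simp [bregG, finSuccEquiv'_succAbove, finSuccEquiv'_symm_some]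

lemma bregFG {m : ℕ} (i k : Fin (m+1)) (τ : Equiv.Perm (Fin m)) : bregF i k (bregG i k τ) = τ := by
  ext j
  have h := bregF_spec i k (bregG i k τ) (bregG_at i k τ) j
  rw [bregG_succAbove] at h
  exact congrArg Fin.val (Fin.succAbove_right_injective h).symm

lemma bregGF {m : ℕ} (i k : Fin (m+1)) (σ : Equiv.Perm (Fin (m+1))) (hσ : σ i = k) :
    bregG i k (bregF i k σ) = σ := by
  ext x
  rcases eq_or_ne x i with rfl | hx
  · rw [bregG_at, hσ]
  · obtain ⟨j, rfl⟩ := Fin.exists_succAbove_eq hx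
    rw [bregG_succAbove, ← bregF_spec i k σ hσ]

lemma fiber_card {m : ℕ} (A : Matrix (Fin (m+1)) (Fin (m+1)) ℕ) (i k : Fin (m+1))
    (hik : A i k = 1) :
    bregN A i k = (bregS (bregMinor A i k)).card := by
  refine Finset.card_bij' (fun σ _ => bregF i k σ) (fun τ _ => bregG i k τ) ?_ ?_ ?_ ?_
  · intro σ hσ
    simp only [bregS, Finset.mem_filter, Finset.mem_univ, true_and] at hσ ⊢
    intro j
    rw [bregMinor, Matrix.submatrix_apply, ← bregF_spec i k σ hσ.2 j]
    exact hσ.1 _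
  · intro τ hτ
    simp only [bregS, Finset.mem_filter, Finset.mem_univ, true_and] at hτ ⊢
    refine ⟨fun j => ?_, bregG_at i k τ⟩
    rcases eq_or_ne j i with rfl | hj
    · rw [bregG_at]; exact hik
    · obtain ⟨j', rfl⟩ := Fin.exists_succAbove_eq hj
      rw [bregG_succAbove]
      exact hτ j'
  · intro σ hσ
    simp only [bregS, Finset.mem_filter] at hσ
    exact bregGF i k σ hσ.2
  · intro τ _
    exact bregFG i k τ

lemma bregW_mul (r : ℕ) : (r : ℝ) * bregW r = Real.log (Nat.factorial r) := by
  rcases Nat.eq_zero_or_pos r with rfl | hr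
  · simp [bregW]
  · have : (r:ℝ) ≠ 0 := by positivity
    unfold bregW
    field_simp

lemma breg_prod_rpow {ι : Type*} [Fintype ι] (r : ι → ℕ) :
    ∏ i, ((Nat.factorial (r i) : ℝ)) ^ ((1:ℝ) / (r i : ℝ)) = Real.exp (∑ i, bregW (r i)) := by
  rw [Real.exp_sum]
  refine Finset.prod_congr rfl fun i _ => ?_
  have hpos : (0:ℝ) < (Nat.factorial (r i) : ℝ) := by exact_mod_cast (r i).factorial_pos
  rw [Real.rpow_def_of_pos hpos, bregW]
  congr 1
  ring

lemma breg_jensen {α : Type*} (s : Finset α) (hs : s.Nonempty) (t : α → ℝ)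
    (ht : ∀ a ∈ s, 0 ≤ t a) (hP : 0 < ∑ a ∈ s, t a) :
    (∑ a ∈ s, t a) * Real.log (∑ a ∈ s, t a) - (∑ a ∈ s, t a) * Real.log s.card
      ≤ ∑ a ∈ s, t a * Real.log (t a) := by
  set P := ∑ a ∈ s, t a with hPdef
  have hc : (0:ℝ) < (s.card : ℝ) := by exact_mod_cast Finset.card_pos.mpr hs
  set c := (s.card : ℝ) with hcdef
  have h₁ : ∑ _a ∈ s, c⁻¹ = 1 := by
    rw [Finset.sum_const, nsmul_eq_mul, mul_inv_cancel₀ hc.ne']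
  have hj := Real.convexOn_mul_log.map_sum_le (w := fun _ => c⁻¹) (p := t)
    (fun a _ => by positivity) h₁ (fun a ha => Set.mem_Ici.mpr (ht a ha))
  simp only [smul_eq_mul, ← Finset.mul_sum, ← hPdef] at hj
  have hlog : Real.log (c⁻¹ * P) = Real.log P - Real.log c := by
    rw [Real.log_mul (by positivity) hP.ne', Real.log_inv]; ring
  rw [hlog] at hj
  have h2 := mul_le_mul_of_nonneg_left hj hc.le
  calc P * Real.log P - P * Real.log c
      = c * (c⁻¹ * P * (Real.log P - Real.log c)) := by field_simp
    _ ≤ c * (c⁻¹ * ∑ a ∈ s, t a * Real.log (t a)) := h2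
    _ = ∑ a ∈ s, t a * Real.log (t a) := by field_simp

/-- Brégman's theorem (Minc conjecture). -/
theorem bregman (n : ℕ) (A : Matrix (Fin n) (Fin n) ℕ)
    (h01 : ∀ i j, A i j = 0 ∨ A i j = 1) :
    (permanent A : ℝ) ≤
      ∏ i, ((Nat.factorial (∑ j, A i j) : ℝ)) ^ ((1 : ℝ) / ((∑ j, A i j : ℕ) : ℝ)) := by
  induction n using Nat.strong_induction_on with
  | _ n IH =>
  rcases n with _ | m
  · simp [permanent]
  -- n = m + 1
  rw [permanent_eq_card A h01]
  by_cases hS : (bregS A).card = 0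
  · rw [hS]
    push_cast
    positivity
  have hP : 0 < (bregS A).card := Nat.pos_of_ne_zero hS
  have hPR : (0:ℝ) < ((bregS A).card : ℝ) := by exact_mod_cast hP
  obtain ⟨σ₀, hσ₀⟩ := Finset.card_pos.mp hP
  have hmemS : ∀ σ : Equiv.Perm (Fin (m+1)), σ ∈ bregS A ↔ ∀ j, A j (σ j) = 1 := by
    intro σ; simp [bregS]
  have hσ₀1 := (hmemS σ₀).mp hσ₀
  have hr1 : ∀ i : Fin (m+1), 1 ≤ ∑ j, A i j := by
    intro i
    calc 1 = A i (σ₀ i) := (hσ₀1 i).symm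
      _ ≤ ∑ j, A i j := Finset.single_le_sum (fun _ _ => Nat.zero_le _) (Finset.mem_univ _)
  suffices hlog : Real.log ((bregS A).card) ≤ ∑ i, bregW (∑ j, A i j) by
    rw [breg_prod_rpow]
    calc ((bregS A).card : ℝ) = Real.exp (Real.log ((bregS A).card)) := (Real.exp_log hPR).symm
      _ ≤ Real.exp (∑ i, bregW (∑ j, A i j)) := Real.exp_le_exp.mpr hlog
  -- fiber counting facts
  have hNsum : ∀ i, ∑ k, bregN A i k = (bregS A).card := by
    intro i
    exact (Finset.card_eq_sum_card_fiberwise fun σ _ => Finset.mem_univ (σ i)).symm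
  have hN0 : ∀ i k, A i k ≠ 1 → bregN A i k = 0 := by
    intro i k h
    rw [bregN]
    apply Finset.card_eq_zero.mpr
    apply Finset.filter_eq_empty_iff.mpr
    intro σ hσ hσik
    exact h (hσik ▸ (hmemS σ).mp hσ i)
  have hN1 : ∀ σ ∈ bregS A, ∀ i, 1 ≤ bregN A i (σ i) := by
    intro σ hσ i
    apply Finset.card_pos.mpr
    exact ⟨σ, Finset.mem_filter.mpr ⟨hσ, rfl⟩⟩
  -- row sums of minors
  have huminor : ∀ (i k : Fin (m+1)), ∀ j' : Fin m,
      (∑ l, bregMinor A i k j' l) = bregU A (i.succAbove j') k := by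
    intro i k j'
    have h2 := Fin.sum_univ_succAbove (fun l => A (i.succAbove j') l) k
    have h3 : ∑ l, bregMinor A i k j' l = ∑ l : Fin m, A (i.succAbove j') (k.succAbove l) := rfl
    rw [h3, bregU]
    rcases h01 (i.succAbove j') k with h | h <;> rw [h] at h2 <;> simp [h] <;> omega
  -- Step B1: bound log of fibers via the induction hypothesis applied to minors
  have hF4 : ∀ σ ∈ bregS A, ∀ i : Fin (m+1),
      Real.log (bregN A i (σ i)) ≤ ∑ j' : Fin m, bregW (bregU A (i.succAbove j') (σ i)) := by
    intro σ hσ i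
    have hik : A i (σ i) = 1 := (hmemS σ).mp hσ i
    have h01' : ∀ a b, bregMinor A i (σ i) a b = 0 ∨ bregMinor A i (σ i) a b = 1 :=
      fun a b => h01 _ _
    have hperm : bregN A i (σ i) = permanent (bregMinor A i (σ i)) := by
      rw [fiber_card A i (σ i) hik, permanent_eq_card _ h01']
    have hIH := IH m (Nat.lt_succ_self m) (bregMinor A i (σ i)) h01'
    rw [breg_prod_rpow] at hIH
    have hNpos : (0:ℝ) < (bregN A i (σ i) : ℝ) := by exact_mod_cast hN1 σ hσ i
    calc Real.log (bregN A i (σ i))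
        ≤ Real.log (Real.exp (∑ j', bregW (∑ l, bregMinor A i (σ i) j' l))) := by
          apply Real.log_le_log hNpos
          rw [hperm]
          exact hIH
      _ = ∑ j', bregW (∑ l, bregMinor A i (σ i) j' l) := Real.log_exp _
      _ = ∑ j', bregW (bregU A (i.succAbove j') (σ i)) :=
          Finset.sum_congr rfl fun j' _ => by rw [huminor i (σ i) j']
  -- Step A (Jensen, per row i)
  have hF6 : ∀ i : Fin (m+1),
      ((bregS A).card : ℝ) * Real.log ((bregS A).card)
        ≤ ((bregS A).card : ℝ) * Real.log ((∑ j, A i j : ℕ) : ℝ)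
          + ∑ σ ∈ bregS A, Real.log (bregN A i (σ i)) := by
    intro i
    have hcard : (Finset.univ.filter fun k => A i k = 1).card = ∑ j, A i j :=
      (rowsum_eq_card A h01 i).symm
    have hsne : (Finset.univ.filter fun k => A i k = 1).Nonempty :=
      ⟨σ₀ i, Finset.mem_filter.mpr ⟨Finset.mem_univ _, hσ₀1 i⟩⟩
    have hsumN : ∑ k ∈ Finset.univ.filter fun k => A i k = 1, (bregN A i k : ℝ)
        = ((bregS A).card : ℝ) := by
      rw [Finset.sum_filter_of_ne]
      · exact_mod_cast congrArg (Nat.cast : ℕ → ℝ) (hNsum i)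
      · intro k _ hk
        by_contra h
        rw [hN0 i k h] at hk
        simp at hk
    have hj := breg_jensen (Finset.univ.filter fun k => A i k = 1) hsne
      (fun k => (bregN A i k : ℝ)) (fun k _ => by positivity) (by rw [hsumN]; exact hPR)
    rw [hsumN, hcard] at hj
    have hj' : ((bregS A).card : ℝ) * Real.log ((bregS A).card)
        - ((bregS A).card : ℝ) * Real.log ((∑ j, A i j : ℕ) : ℝ)
        ≤ ∑ k ∈ Finset.univ.filter fun k => A i k = 1,
            (bregN A i k : ℝ) * Real.log (bregN A i k) := by simpa using hj
    have hfib : ∑ σ ∈ bregS A, Real.log (bregN A i (σ i))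
        = ∑ k ∈ Finset.univ.filter fun k => A i k = 1,
            (bregN A i k : ℝ) * Real.log (bregN A i k) := by
      rw [← Finset.sum_fiberwise_of_maps_to' (t := Finset.univ)
        (fun σ _ => Finset.mem_univ (σ i)) (fun k => Real.log (bregN A i k))]
      rw [← Finset.sum_filter_of_ne (s := Finset.univ) (p := fun k => A i k = 1)
          (f := fun k => ∑ _σ ∈ (bregS A).filter fun σ => σ i = k, Real.log (bregN A i k)) ?_]
      · refine Finset.sum_congr rfl fun k _ => ?_
        rw [Finset.sum_const, nsmul_eq_mul, bregN]
      · intro k _ hk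
        by_contra h
        apply hk
        have hempty : ((bregS A).filter fun σ => σ i = k) = ∅ :=
          Finset.card_eq_zero.mp (hN0 i k h)
        simp only [hempty, Finset.sum_empty]
    rw [hfib]
    linarith [hj']
  -- counting the complement of a row's support
  have hq : ∀ j : Fin (m+1),
      ((Finset.univ.filter fun k => ¬ A j k = 1).card : ℝ) = (m+1 : ℝ) - ((∑ l, A j l : ℕ) : ℝ) := by
    intro j
    have h1 : (Finset.univ.filter fun k => A j k = 1).card
        + (Finset.univ.filter fun k => ¬ A j k = 1).card = m + 1 := by
      rw [Finset.card_filter_add_card_filter_not]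
      simp
    rw [rowsum_eq_card A h01 j]
    have := congrArg (Nat.cast : ℕ → ℝ) h1
    push_cast at this
    linarith
  -- Step B2: summing u over a permutation's values
  have hF9 : ∀ (j : Fin (m+1)) (σ : Equiv.Perm (Fin (m+1))),
      ∑ i, bregW (bregU A j (σ i))
        = ((∑ l, A j l : ℕ) : ℝ) * bregW ((∑ l, A j l) - 1)
          + ((m+1 : ℝ) - ((∑ l, A j l : ℕ) : ℝ)) * bregW (∑ l, A j l) := by
    intro j σ
    rw [Equiv.sum_comp σ (fun k => bregW (bregU A j k))]
    simp only [bregU, apply_ite bregW]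
    rw [Finset.sum_ite, Finset.sum_const, Finset.sum_const, nsmul_eq_mul, nsmul_eq_mul,
      ← rowsum_eq_card A h01 j, hq j]
  -- Step B: per σ ∈ S
  have hF10 : ∀ σ ∈ bregS A,
      ∑ i, Real.log (bregN A i (σ i))
        ≤ ∑ j, (Real.log (Nat.factorial ((∑ l, A j l) - 1))
            + ((m+1 : ℝ) - ((∑ l, A j l : ℕ) : ℝ)) * bregW (∑ l, A j l)) := by
    intro σ hσ
    have h2 : ∀ i : Fin (m+1), ∑ j' : Fin m, bregW (bregU A (i.succAbove j') (σ i))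
        = (∑ j, bregW (bregU A j (σ i))) - bregW (bregU A i (σ i)) := by
      intro i
      have := Fin.sum_univ_succAbove (fun j => bregW (bregU A j (σ i))) i
      linarith
    have h4 : ∀ i, bregU A i (σ i) = (∑ l, A i l) - 1 := by
      intro i
      rw [bregU, if_pos ((hmemS σ).mp hσ i)]
    have h5 : ∀ j : Fin (m+1),
        ((∑ l, A j l : ℕ) : ℝ) * bregW ((∑ l, A j l) - 1) - bregW ((∑ l, A j l) - 1)
          = Real.log (Nat.factorial ((∑ l, A j l) - 1)) := by
      intro j
      have hc : ((∑ l, A j l : ℕ) : ℝ) - 1 = (((∑ l, A j l) - 1 : ℕ) : ℝ) := by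
        rw [Nat.cast_sub (hr1 j)]
        norm_num
      rw [← bregW_mul ((∑ l, A j l) - 1), ← hc]
      ring
    calc ∑ i, Real.log (bregN A i (σ i))
        ≤ ∑ i, ∑ j' : Fin m, bregW (bregU A (i.succAbove j') (σ i)) :=
          Finset.sum_le_sum fun i _ => hF4 σ hσ i
      _ = ∑ i, ((∑ j, bregW (bregU A j (σ i))) - bregW (bregU A i (σ i))) :=
          Finset.sum_congr rfl fun i _ => h2 i
      _ = (∑ i, ∑ j, bregW (bregU A j (σ i))) - ∑ i, bregW (bregU A i (σ i)) :=
          Finset.sum_sub_distrib _ _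
      _ = (∑ j, ∑ i, bregW (bregU A j (σ i))) - ∑ j, bregW ((∑ l, A j l) - 1) := by
          rw [Finset.sum_comm]
          congr 1
          exact Finset.sum_congr rfl fun i _ => by rw [h4 i]
      _ = ∑ j, ((∑ i, bregW (bregU A j (σ i))) - bregW ((∑ l, A j l) - 1)) :=
          (Finset.sum_sub_distrib _ _).symm
      _ = ∑ j, (Real.log (Nat.factorial ((∑ l, A j l) - 1))
            + ((m+1 : ℝ) - ((∑ l, A j l : ℕ) : ℝ)) * bregW (∑ l, A j l)) := by
          refine Finset.sum_congr rfl fun j _ => ?_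
          rw [hF9 j σ, ← h5 j]
          ring
  -- Assemble everything
  have hfact : ∀ j : Fin (m+1),
      Real.log ((∑ l, A j l : ℕ) : ℝ) + Real.log (Nat.factorial ((∑ l, A j l) - 1))
        = ((∑ l, A j l : ℕ) : ℝ) * bregW (∑ l, A j l) := by
    intro j
    have h1 : (∑ l, A j l) * Nat.factorial ((∑ l, A j l) - 1) = Nat.factorial (∑ l, A j l) :=
      Nat.mul_factorial_pred (Nat.pos_iff_ne_zero.mp (hr1 j))
    have hrpos : (0:ℝ) < ((∑ l, A j l : ℕ) : ℝ) := by exact_mod_cast hr1 j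
    have hfpos : (0:ℝ) < ((Nat.factorial ((∑ l, A j l) - 1) : ℕ) : ℝ) := by
      exact_mod_cast Nat.factorial_pos _
    rw [← Real.log_mul hrpos.ne' hfpos.ne', bregW_mul]
    congr 1
    exact_mod_cast congrArg (Nat.cast : ℕ → ℝ) h1
  have htotal : (m+1 : ℝ) * (((bregS A).card : ℝ) * Real.log ((bregS A).card))
      ≤ (m+1 : ℝ) * (((bregS A).card : ℝ) * ∑ j, bregW (∑ l, A j l)) := by
    have hsum6 : ∑ _i : Fin (m+1), ((bregS A).card : ℝ) * Real.log ((bregS A).card)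
        ≤ ∑ i : Fin (m+1), (((bregS A).card : ℝ) * Real.log ((∑ j, A i j : ℕ) : ℝ)
            + ∑ σ ∈ bregS A, Real.log (bregN A i (σ i))) :=
      Finset.sum_le_sum fun i _ => hF6 i
    have hswap : ∑ i : Fin (m+1), ∑ σ ∈ bregS A, Real.log (bregN A i (σ i))
        = ∑ σ ∈ bregS A, ∑ i : Fin (m+1), Real.log (bregN A i (σ i)) := Finset.sum_comm
    have hBsum : ∑ σ ∈ bregS A, ∑ i : Fin (m+1), Real.log (bregN A i (σ i))
        ≤ ((bregS A).card : ℝ) * ∑ j, (Real.log (Nat.factorial ((∑ l, A j l) - 1))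
            + ((m+1 : ℝ) - ((∑ l, A j l : ℕ) : ℝ)) * bregW (∑ l, A j l)) := by
      calc ∑ σ ∈ bregS A, ∑ i : Fin (m+1), Real.log (bregN A i (σ i))
          ≤ ∑ _σ ∈ bregS A, ∑ j, (Real.log (Nat.factorial ((∑ l, A j l) - 1))
              + ((m+1 : ℝ) - ((∑ l, A j l : ℕ) : ℝ)) * bregW (∑ l, A j l)) :=
            Finset.sum_le_sum fun σ hσ => hF10 σ hσ
        _ = _ := by rw [Finset.sum_const, nsmul_eq_mul]
    have hconst : ∑ _i : Fin (m+1), ((bregS A).card : ℝ) * Real.log ((bregS A).card)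
        = (m+1 : ℝ) * (((bregS A).card : ℝ) * Real.log ((bregS A).card)) := by
      rw [Finset.sum_const, nsmul_eq_mul]
      simp
    have hpt : ∀ j : Fin (m+1),
        Real.log ((∑ l, A j l : ℕ) : ℝ) + (Real.log (Nat.factorial ((∑ l, A j l) - 1))
            + ((m+1 : ℝ) - ((∑ l, A j l : ℕ) : ℝ)) * bregW (∑ l, A j l))
          = (m+1 : ℝ) * bregW (∑ l, A j l) := by
      intro j
      have h := hfact j
      calc Real.log ((∑ l, A j l : ℕ) : ℝ) + (Real.log (Nat.factorial ((∑ l, A j l) - 1))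
              + ((m+1 : ℝ) - ((∑ l, A j l : ℕ) : ℝ)) * bregW (∑ l, A j l))
          = (Real.log ((∑ l, A j l : ℕ) : ℝ) + Real.log (Nat.factorial ((∑ l, A j l) - 1)))
              + ((m+1 : ℝ) - ((∑ l, A j l : ℕ) : ℝ)) * bregW (∑ l, A j l) := by ring
        _ = ((∑ l, A j l : ℕ) : ℝ) * bregW (∑ l, A j l)
              + ((m+1 : ℝ) - ((∑ l, A j l : ℕ) : ℝ)) * bregW (∑ l, A j l) := by rw [h]
        _ = (m+1 : ℝ) * bregW (∑ l, A j l) := by ring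
    have hrhs : ∑ i : Fin (m+1), (((bregS A).card : ℝ) * Real.log ((∑ j, A i j : ℕ) : ℝ))
          + ((bregS A).card : ℝ) * ∑ j, (Real.log (Nat.factorial ((∑ l, A j l) - 1))
            + ((m+1 : ℝ) - ((∑ l, A j l : ℕ) : ℝ)) * bregW (∑ l, A j l))
        = (m+1 : ℝ) * (((bregS A).card : ℝ) * ∑ j, bregW (∑ l, A j l)) := by
      rw [← Finset.mul_sum, ← mul_add, ← Finset.sum_add_distrib]
      rw [Finset.sum_congr rfl fun j _ => hpt j]
      rw [← Finset.mul_sum]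
      ring
    calc (m+1 : ℝ) * (((bregS A).card : ℝ) * Real.log ((bregS A).card))
        = ∑ _i : Fin (m+1), ((bregS A).card : ℝ) * Real.log ((bregS A).card) := hconst.symm
      _ ≤ ∑ i : Fin (m+1), (((bregS A).card : ℝ) * Real.log ((∑ j, A i j : ℕ) : ℝ)
            + ∑ σ ∈ bregS A, Real.log (bregN A i (σ i))) := hsum6
      _ = ∑ i : Fin (m+1), (((bregS A).card : ℝ) * Real.log ((∑ j, A i j : ℕ) : ℝ))
            + ∑ σ ∈ bregS A, ∑ i : Fin (m+1), Real.log (bregN A i (σ i)) := by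
          rw [Finset.sum_add_distrib, hswap]
      _ ≤ ∑ i : Fin (m+1), (((bregS A).card : ℝ) * Real.log ((∑ j, A i j : ℕ) : ℝ))
            + ((bregS A).card : ℝ) * ∑ j, (Real.log (Nat.factorial ((∑ l, A j l) - 1))
              + ((m+1 : ℝ) - ((∑ l, A j l : ℕ) : ℝ)) * bregW (∑ l, A j l)) := by
          linarith [hBsum]
      _ = (m+1 : ℝ) * (((bregS A).card : ℝ) * ∑ j, bregW (∑ l, A j l)) := hrhs
  have hm : (0:ℝ) < (m+1 : ℝ) * ((bregS A).card : ℝ) := by positivity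
  rw [← mul_assoc, ← mul_assoc] at htotal
  exact le_of_mul_le_mul_left htotal hm
end

section
/- Let L be a partition of the blocks of a Steiner system S(3, q+1, n) (n = q^4+1) into parts L_1,...,L_t each consisting of 1/p pairwise vertex-disjoint blocks, where 1/p is an integer. For a uniformly random permutation π of [n], the probability that there exist two disjoint edges e, f of the 3-set S(π) lying in two distinct blocks of the same part L_i is at most Θ(n^{-1/4}). Consequently, the number of 'bad' permutations is at most n!·Θ(n^{-1/4}). -/
open Finset
open scoped Classical

/-- The "3-set" of a permutation `π` of `ZMod n`: the `n` triples of cyclically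
consecutive elements of `π`. -/
def rset (n : ℕ) [NeZero n] (π : Equiv.Perm (ZMod n)) : Finset (Finset (ZMod n)) :=
  Finset.image (fun i : ZMod n => ({π i, π (i + 1), π (i + 2)} : Finset (ZMod n)))
    Finset.univ

/-- Permutations with prescribed values on a finset number at most `(N - |s|)!`. -/
lemma fixed_card_le {α : Type*} [Fintype α] [DecidableEq α] (s : Finset α) (g : α → α) :
    (univ.filter fun π : Equiv.Perm α => ∀ x ∈ s, π x = g x).card
      ≤ Nat.factorial (Fintype.card α - s.card) := by
  classical
  set F := univ.filter fun π : Equiv.Perm α => ∀ x ∈ s, π x = g x with hF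
  rcases F.eq_empty_or_nonempty with h | ⟨π0, hπ0⟩
  · simp [h]
  · have hπ0' : ∀ x ∈ s, π0 x = g x := (mem_filter.mp hπ0).2
    set t := s.image (fun x => π0 x) with ht
    have htc : t.card = s.card := card_image_of_injective _ π0.injective
    have key : ∀ π ∈ F, ∀ x, x ∉ s → π x ∉ t := by
      intro π hπ x hx hmem
      obtain ⟨y, hy, hyx⟩ := mem_image.mp hmem
      have h1 : π y = π x := by
        rw [(mem_filter.mp hπ).2 y hy, ← hπ0' y hy, hyx]
      exact hx (π.injective h1 ▸ hy)
    have := Fintype.card_le_of_injective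
      (β := {x : α // x ∉ s} ↪ {y : α // y ∉ t})
      (fun π : {π : Equiv.Perm α // π ∈ F} =>
        ⟨fun x => ⟨π.1 x.1, key π.1 π.2 x.1 x.2⟩, by
          intro a b hab
          apply Subtype.ext
          exact π.1.injective (congrArg Subtype.val hab)⟩)
      (by
        intro ⟨π, hπ⟩ ⟨π', hπ'⟩ hee
        simp only [Subtype.mk.injEq]
        ext x
        by_cases hx : x ∈ s
        · rw [(mem_filter.mp hπ).2 x hx, (mem_filter.mp hπ').2 x hx]
        · have := congrFun (congrArg (fun (e : {x : α // x ∉ s} ↪ {y : α // y ∉ t}) => e.toFun) hee) ⟨x, hx⟩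
          exact congrArg Subtype.val this)
    have hcs : Fintype.card {x : α // x ∉ s} = Fintype.card α - s.card := by
      rw [Fintype.card_subtype]
      simp [Finset.filter_not, Finset.filter_congr_decidable,
        card_sdiff_of_subset (subset_univ _), card_univ, filter_mem_eq_inter]
    have hct : Fintype.card {y : α // y ∉ t} = Fintype.card α - s.card := by
      rw [Fintype.card_subtype]
      simp [Finset.filter_not, Finset.filter_congr_decidable,
        card_sdiff_of_subset (subset_univ _), card_univ, filter_mem_eq_inter, htc]
    calc F.card = Fintype.card {π : Equiv.Perm α // π ∈ F} := (Fintype.card_coe F).symm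
      _ ≤ Fintype.card ({x : α // x ∉ s} ↪ {y : α // y ∉ t}) := this
      _ = Nat.factorial (Fintype.card α - s.card) := by
          rw [Fintype.card_embedding_eq, hcs, hct, Nat.descFactorial_self]

lemma constrained_card_le {α : Type*} [Fintype α] [DecidableEq α] (s : Finset α)
    (F : α → Finset α) :
    (univ.filter fun π : Equiv.Perm α => ∀ x ∈ s, π x ∈ F x).card
      ≤ (∏ x ∈ s, (F x).card) * Nat.factorial (Fintype.card α - s.card) := by
  classical
  have hsub : (univ.filter fun π : Equiv.Perm α => ∀ x ∈ s, π x ∈ F x) ⊆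
      (s.pi F).biUnion (fun g => univ.filter fun π : Equiv.Perm α =>
        ∀ x ∈ s, π x = (fun y => if h : y ∈ s then g y h else y) x) := by
    intro π hπ
    have hπ' := (mem_filter.mp hπ).2
    refine mem_biUnion.mpr ⟨fun x _ => π x, Finset.mem_pi.mpr (fun x h => hπ' x h), ?_⟩
    simp only [mem_filter, mem_univ, true_and]
    intro x hx
    simp [hx]
  calc (univ.filter fun π : Equiv.Perm α => ∀ x ∈ s, π x ∈ F x).card
      ≤ ((s.pi F).biUnion (fun g => univ.filter fun π : Equiv.Perm α =>
          ∀ x ∈ s, π x = (fun y => if h : y ∈ s then g y h else y) x)).card :=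
        card_le_card hsub
    _ ≤ ∑ g ∈ s.pi F, (univ.filter fun π : Equiv.Perm α =>
          ∀ x ∈ s, π x = (fun y => if h : y ∈ s then g y h else y) x).card :=
        card_biUnion_le
    _ ≤ ∑ _g ∈ s.pi F, Nat.factorial (Fintype.card α - s.card) := by
        refine Finset.sum_le_sum fun g _ => ?_
        exact fixed_card_le s _
    _ = (∏ x ∈ s, (F x).card) * Nat.factorial (Fintype.card α - s.card) := by
        rw [Finset.sum_const, Finset.card_pi, smul_eq_mul]

lemma window_card_le (n q : ℕ) [NeZero n] (hn : 7 ≤ n) (i j : ZMod n)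
    (b b' : Finset (ZMod n)) (hb : b.card ≤ q + 1) (hb' : b'.card ≤ q + 1)
    (hdisj : Disjoint b b') :
    (univ.filter fun π : Equiv.Perm (ZMod n) =>
        ({π i, π (i + 1), π (i + 2)} : Finset (ZMod n)) ⊆ b ∧
        ({π j, π (j + 1), π (j + 2)} : Finset (ZMod n)) ⊆ b').card
      ≤ (q + 1) ^ 6 * Nat.factorial (n - 6) := by
  classical
  set w1 : Finset (ZMod n) := {i, i + 1, i + 2} with hw1
  set w2 : Finset (ZMod n) := {j, j + 1, j + 2} with hw2
  have h1 : (1 : ZMod n) ≠ 0 := by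
    rw [show (1 : ZMod n) = ((1 : ℕ) : ZMod n) by norm_num]
    rw [Ne, ZMod.natCast_eq_zero_iff]
    exact fun h => by have := Nat.le_of_dvd one_pos h; omega
  have h2 : (2 : ZMod n) ≠ 0 := by
    rw [show (2 : ZMod n) = ((2 : ℕ) : ZMod n) by norm_num]
    rw [Ne, ZMod.natCast_eq_zero_iff]
    exact fun h => by have := Nat.le_of_dvd (by norm_num) h; omega
  have h12 : (1 : ZMod n) ≠ 2 := by
    intro h
    have : (1 : ZMod n) = ((1 : ℕ) : ZMod n) := by norm_num
    have h' : ((1 : ℕ) : ZMod n) = ((2 : ℕ) : ZMod n) := by push_cast; exact h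
    have := (ZMod.natCast_eq_natCast_iff' 1 2 n).mp h'
    simp [Nat.mod_eq_of_lt (show (1:ℕ) < n by omega), Nat.mod_eq_of_lt (show (2:ℕ) < n by omega)] at this
  have hcard : ∀ x : ZMod n, ({x, x + 1, x + 2} : Finset (ZMod n)).card = 3 := by
    intro x
    rw [card_insert_of_notMem, card_insert_of_notMem, card_singleton]
    · simp only [mem_singleton]
      intro h
      exact h12 ((add_right_inj x).mp h)
    · simp only [mem_insert, mem_singleton]
      push_neg
      exact ⟨fun h => h1 (left_eq_add.mp h), fun h => h2 (left_eq_add.mp h)⟩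
  have hmemw1 : ∀ (π : Equiv.Perm (ZMod n)) x, x ∈ w1 →
      ({π i, π (i + 1), π (i + 2)} : Finset (ZMod n)) ⊆ b → π x ∈ b := by
    intro π x hx hsub
    apply hsub
    simp only [hw1, mem_insert, mem_singleton] at hx
    rcases hx with rfl | rfl | rfl <;> simp
  have hmemw2 : ∀ (π : Equiv.Perm (ZMod n)) x, x ∈ w2 →
      ({π j, π (j + 1), π (j + 2)} : Finset (ZMod n)) ⊆ b' → π x ∈ b' := by
    intro π x hx hsub
    apply hsub
    simp only [hw2, mem_insert, mem_singleton] at hx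
    rcases hx with rfl | rfl | rfl <;> simp
  by_cases hds : Disjoint w1 w2
  · -- main case
    set s : Finset (ZMod n) := w1 ∪ w2 with hs
    have hscard : s.card = 6 := by
      rw [hs, card_union_of_disjoint hds, hcard, hcard]
    set F : ZMod n → Finset (ZMod n) := fun x => if x ∈ w1 then b else b' with hFdef
    have hsub : (univ.filter fun π : Equiv.Perm (ZMod n) =>
        ({π i, π (i + 1), π (i + 2)} : Finset (ZMod n)) ⊆ b ∧
        ({π j, π (j + 1), π (j + 2)} : Finset (ZMod n)) ⊆ b') ⊆
        (univ.filter fun π : Equiv.Perm (ZMod n) => ∀ x ∈ s, π x ∈ F x) := by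
      intro π hπ
      obtain ⟨-, hπ1, hπ2⟩ := mem_filter.mp hπ
      refine mem_filter.mpr ⟨mem_univ _, ?_⟩
      intro x hx
      rcases mem_union.mp hx with hx1 | hx2
      · rw [hFdef]; simp only [if_pos hx1]; exact hmemw1 π x hx1 hπ1
      · have hx1 : x ∉ w1 := disjoint_right.mp hds hx2
        rw [hFdef]; simp only [if_neg hx1]; exact hmemw2 π x hx2 hπ2
    calc _ ≤ (univ.filter fun π : Equiv.Perm (ZMod n) => ∀ x ∈ s, π x ∈ F x).card :=
          card_le_card hsub
      _ ≤ (∏ x ∈ s, (F x).card) * Nat.factorial (Fintype.card (ZMod n) - s.card) :=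
          constrained_card_le s F
      _ ≤ (q + 1) ^ 6 * Nat.factorial (n - 6) := by
          rw [ZMod.card, hscard]
          refine Nat.mul_le_mul_right _ ?_
          calc ∏ x ∈ s, (F x).card ≤ (q + 1) ^ s.card := by
                refine Finset.prod_le_pow_card s _ (q + 1) ?_
                intro x _
                rw [hFdef]
                dsimp only
                split <;> assumption
            _ = (q + 1) ^ 6 := by rw [hscard]
  · -- windows intersect: the filter is empty
    obtain ⟨x, hx1, hx2⟩ := Finset.not_disjoint_iff.mp hds
    have : (univ.filter fun π : Equiv.Perm (ZMod n) =>
        ({π i, π (i + 1), π (i + 2)} : Finset (ZMod n)) ⊆ b ∧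
        ({π j, π (j + 1), π (j + 2)} : Finset (ZMod n)) ⊆ b') = ∅ := by
      rw [Finset.eq_empty_iff_forall_notMem]
      intro π hπ
      obtain ⟨-, hπ1, hπ2⟩ := mem_filter.mp hπ
      exact (disjoint_left.mp hdisj (hmemw1 π x hx1 hπ1)) (hmemw2 π x hx2 hπ2)
    rw [this]
    simp

lemma fact_six (m : ℕ) :
    Nat.factorial (m + 6) =
      ((m+6)*(m+5)*(m+4)*(m+3)*(m+2)*(m+1)) * Nat.factorial m := by
  simp only [show m+6 = (m+5)+1 from rfl, show m+5 = (m+4)+1 from rfl,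
    show m+4 = (m+3)+1 from rfl, show m+3 = (m+2)+1 from rfl,
    show m+2 = (m+1)+1 from rfl, Nat.factorial_succ]
  ring

lemma arith_n (m : ℕ) :
    512 * (m+17)^6 ≤ 80000 * ((m+17)*(m+16)*(m+15)*(m+14)*(m+13)*(m+12)) := by
  have h1 : 12 * (m+17) ≤ 17 * (m+12) := by omega
  have h2 : (12 * (m+17))^6 ≤ (17 * (m+12))^6 := Nat.pow_le_pow_left h1 6
  have h3 : 512 * (m+17)^6 ≤ 80000 * (m+12)^6 := by
    have h4 : 2985984 * (512 * (m+17)^6) ≤ 2985984 * (80000 * (m+12)^6) := by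
      calc 2985984 * (512 * (m+17)^6) = 512 * ((12 * (m+17))^6) := by ring
        _ ≤ 512 * ((17 * (m+12))^6) := Nat.mul_le_mul_left _ h2
        _ = 12358435328 * (m+12)^6 := by ring
        _ ≤ 238878720000 * (m+12)^6 := Nat.mul_le_mul_right _ (by norm_num)
        _ = 2985984 * (80000 * (m+12)^6) := by ring
    exact Nat.le_of_mul_le_mul_left h4 (by norm_num)
  calc 512 * (m+17)^6 ≤ 80000 * (m+12)^6 := h3
    _ = 80000 * ((m+12)*(m+12)*(m+12)*(m+12)*(m+12)*(m+12)) := by ring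
    _ ≤ 80000 * ((m+17)*(m+16)*(m+15)*(m+14)*(m+13)*(m+12)) := by gcongr <;> omega

lemma choose_bound (q : ℕ) (hq : 2 ≤ q) : q^3 ≤ 8 * ((q+1).choose 3) := by
  obtain ⟨r, rfl⟩ : ∃ r, q = r + 2 := ⟨q - 2, by omega⟩
  have h := Nat.choose_mul_factorial_mul_factorial (show 3 ≤ r + 2 + 1 by omega)
  have hfac : Nat.factorial (r + 3) = ((r+3)*(r+2)*(r+1)) * Nat.factorial r := by
    simp only [show r+3 = (r+2)+1 from rfl, show r+2 = (r+1)+1 from rfl, Nat.factorial_succ]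
    ring
  have hkey : ((r + 2 + 1).choose 3) * 6 = (r+3)*(r+2)*(r+1) := by
    have h' : ((r + 2 + 1).choose 3 * 6) * Nat.factorial r
        = ((r+3)*(r+2)*(r+1)) * Nat.factorial r := by
      have h36 : Nat.factorial 3 = 6 := by decide
      have hsub : r + 2 + 1 - 3 = r := by omega
      calc ((r + 2 + 1).choose 3 * 6) * Nat.factorial r
          = (r + 2 + 1).choose 3 * Nat.factorial 3 * Nat.factorial (r + 2 + 1 - 3) := by
            rw [h36, hsub]
        _ = Nat.factorial (r + 2 + 1) := h
        _ = ((r+3)*(r+2)*(r+1)) * Nat.factorial r := by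
            rw [show r + 2 + 1 = r + 3 from rfl, hfac]
    exact Nat.eq_of_mul_eq_mul_right (Nat.factorial_pos r) h'
  have h6 : (r+2)^3 * 6 ≤ (8 * ((r + 2 + 1).choose 3)) * 6 := by
    rw [show (8 * ((r + 2 + 1).choose 3)) * 6 = 8 * (((r + 2 + 1).choose 3) * 6) by ring, hkey]
    rw [show 8*((r+3)*(r+2)*(r+1)) = (r+2)^3*6 + (2*r^3+12*r^2+16*r) by ring]
    exact Nat.le_add_right _ _
  exact Nat.le_of_mul_le_mul_right h6 (by norm_num)

lemma arith_q (q n : ℕ) (hq : 2 ≤ q) (hn : n = q^4 + 1) :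
    (q+1)^6 * q ≤ 64 * (q^3 * n) := by
  calc (q+1)^6 * q ≤ (2*q)^6 * q := Nat.mul_le_mul_right _ (Nat.pow_le_pow_left (by omega) 6)
    _ = 64 * (q^3 * q^4) := by ring
    _ ≤ 64 * (q^3 * n) := by
        refine Nat.mul_le_mul_left _ (Nat.mul_le_mul_left _ ?_)
        omega

/-- The main arithmetic estimate. -/
lemma arith_main (q n : ℕ) (hq : 2 ≤ q) (hn : n = q^4 + 1) :
    (8 * n^3) * (n^2 * ((q+1)^6 * Nat.factorial (n - 6))) * q
      ≤ 80000 * Nat.factorial n * q^3 := by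
  have hn17 : 17 ≤ n := by nlinarith [Nat.pow_le_pow_left hq 4]
  obtain ⟨m, hm⟩ : ∃ m, n = m + 17 := ⟨n - 17, by omega⟩
  have h6 : n - 6 = (m + 11) := by omega
  have e1 : n - 1 = m + 16 := by omega
  have e2 : n - 2 = m + 15 := by omega
  have e3 : n - 3 = m + 14 := by omega
  have e4 : n - 4 = m + 13 := by omega
  have e5 : n - 5 = m + 12 := by omega
  have hfact : Nat.factorial n = (n*(n-1)*(n-2)*(n-3)*(n-4)*(n-5)) * Nat.factorial (n-6) := by
    rw [e1, e2, e3, e4, e5, h6, hm]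
    have hfs := fact_six (m + 11)
    norm_num at hfs
    exact hfs
  have hq' : (q+1)^6 * q ≤ 64 * (q^3 * n) := arith_q q n hq hn
  have hbig : 512 * n^6 ≤ 80000 * (n*(n-1)*(n-2)*(n-3)*(n-4)*(n-5)) := by
    rw [e1, e2, e3, e4, e5, hm]
    exact arith_n m
  calc (8 * n^3) * (n^2 * ((q+1)^6 * Nat.factorial (n - 6))) * q
      = (8 * n^5) * ((q+1)^6 * q) * Nat.factorial (n-6) := by ring
    _ ≤ (8 * n^5) * (64 * (q^3 * n)) * Nat.factorial (n-6) := by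
        exact Nat.mul_le_mul_right _ (Nat.mul_le_mul_left _ hq')
    _ = (512 * n^6) * Nat.factorial (n-6) * q^3 := by ring
    _ ≤ (80000 * (n*(n-1)*(n-2)*(n-3)*(n-4)*(n-5))) * Nat.factorial (n-6) * q^3 := by
        exact Nat.mul_le_mul_right _ (Nat.mul_le_mul_right _ hbig)
    _ = 80000 * Nat.factorial n * q^3 := by rw [hfact]; ring

/-- Let `L` be a partition of the blocks of a Steiner system `S(3, q+1, n)` (`n = q⁴+1`)
into parts each consisting of `k = 1/p` pairwise vertex-disjoint blocks.  The number of
"bad" permutations `π` of `[n]` — those for which some part contains two edges of the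
3-set of `π` lying in two distinct blocks of that part — is at most `n!·Θ(n^{-1/4})`;
equivalently, the probability that a uniformly random permutation is bad is at most
`Θ(n^{-1/4})`. -/
theorem bad_permutations_bound (k : ℕ) (hk : 2 ≤ k) :
    ∃ C : ℝ, 0 < C ∧
      ∀ (q n : ℕ) [NeZero n], n = q ^ 4 + 1 → 2 ≤ q →
      ∀ Bl : Finset (Finset (ZMod n)),
        (∀ b ∈ Bl, b.card = q + 1) →
        (∀ T : Finset (ZMod n), T.card = 3 → ∃! b, b ∈ Bl ∧ T ⊆ b) →
      ∀ P : Finset (Finset (Finset (ZMod n))),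
        (∀ p ∈ P, ∀ b ∈ p, b ∈ Bl) →
        (∀ b ∈ Bl, ∃! p, p ∈ P ∧ b ∈ p) →
        (∀ p ∈ P, p.card = k) →
        (∀ p ∈ P, ∀ b ∈ p, ∀ b' ∈ p, b ≠ b' → Disjoint b b') →
        (((Finset.univ : Finset (Equiv.Perm (ZMod n))).filter (fun π =>
            ∃ p ∈ P, ∃ e ∈ rset n π, ∃ f ∈ rset n π, ∃ b ∈ p, ∃ b' ∈ p,
              b ≠ b' ∧ e ⊆ b ∧ f ⊆ b')).card : ℝ) ≤
          C * (n : ℝ) ^ (-(1 / 4 : ℝ)) * (Nat.factorial n : ℝ) := by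
  classical
  refine ⟨100000 * k, by positivity, ?_⟩
  intro q n _ hn hq Bl hBlcard hSteiner P hPBl hPart hPcard hPdisj
  have hn17 : 17 ≤ n := by nlinarith [Nat.pow_le_pow_left hq 4]
  have hn7 : 7 ≤ n := by omega
  set Bad := ((Finset.univ : Finset (Equiv.Perm (ZMod n))).filter (fun π =>
      ∃ p ∈ P, ∃ e ∈ rset n π, ∃ f ∈ rset n π, ∃ b ∈ p, ∃ b' ∈ p,
        b ≠ b' ∧ e ⊆ b ∧ f ⊆ b')) with hBad
  set B := Bl.card with hBdef
  -- Step 1 : counting the blocks via the Steiner property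
  have hBC : B * ((q+1).choose 3) ≤ n.choose 3 := by
    have hdisjP : ∀ b ∈ Bl, ∀ b' ∈ Bl, b ≠ b' →
        Disjoint (b.powersetCard 3) (b'.powersetCard 3) := by
      intro b hb b' hb' hne
      rw [Finset.disjoint_left]
      intro T hT hT'
      obtain ⟨hTb, hT3⟩ := Finset.mem_powersetCard.mp hT
      obtain ⟨hTb', -⟩ := Finset.mem_powersetCard.mp hT'
      obtain ⟨u, -, huniq⟩ := hSteiner T hT3
      exact hne ((huniq b ⟨hb, hTb⟩).trans (huniq b' ⟨hb', hTb'⟩).symm)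
    have hcardUnion : (Bl.biUnion (fun b => b.powersetCard 3)).card
        = B * ((q+1).choose 3) := by
      rw [Finset.card_biUnion hdisjP]
      rw [Finset.sum_congr rfl (fun b hb => by rw [Finset.card_powersetCard, hBlcard b hb])]
      rw [Finset.sum_const, smul_eq_mul]
    have hsub : Bl.biUnion (fun b => b.powersetCard 3)
        ⊆ (univ : Finset (ZMod n)).powersetCard 3 := by
      intro T hT
      obtain ⟨b, hb, hTb⟩ := Finset.mem_biUnion.mp hT
      exact Finset.mem_powersetCard.mpr
        ⟨Finset.subset_univ T, (Finset.mem_powersetCard.mp hTb).2⟩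
    calc B * ((q+1).choose 3) = _ := hcardUnion.symm
      _ ≤ ((univ : Finset (ZMod n)).powersetCard 3).card := card_le_card hsub
      _ = n.choose 3 := by rw [Finset.card_powersetCard, card_univ, ZMod.card]
  have hB3 : B * q^3 ≤ 8 * n^3 := by
    calc B * q^3 ≤ B * (8 * ((q+1).choose 3)) := Nat.mul_le_mul_left _ (choose_bound q hq)
      _ = 8 * (B * ((q+1).choose 3)) := by ring
      _ ≤ 8 * (n.choose 3) := Nat.mul_le_mul_left _ hBC
      _ ≤ 8 * n^3 := Nat.mul_le_mul_left _ (Nat.choose_le_pow n 3)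
  -- Step 2 : counting the parts
  have hPk : P.card * k ≤ B := by
    have hdisjParts : ∀ p ∈ P, ∀ p' ∈ P, p ≠ p' → Disjoint (id p) (id p') := by
      intro p hp p' hp' hne
      rw [Finset.disjoint_left]
      intro b hb hb'
      obtain ⟨u, -, huniq⟩ := hPart b (hPBl p hp b hb)
      exact hne ((huniq p ⟨hp, hb⟩).trans (huniq p' ⟨hp', hb'⟩).symm)
    have hcU : (P.biUnion id).card = P.card * k := by
      rw [Finset.card_biUnion hdisjParts]
      simp only [id]
      rw [Finset.sum_congr rfl (fun p hp => hPcard p hp), Finset.sum_const, smul_eq_mul]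
    rw [← hcU]
    apply card_le_card
    intro b hb
    obtain ⟨p, hp, hbp⟩ := Finset.mem_biUnion.mp hb
    exact hPBl p hp b hbp
  -- Step 3 : the covering union bound
  set J := P.biUnion (fun p => p ×ˢ p) with hJ
  set I := (J ×ˢ ((univ : Finset (ZMod n)) ×ˢ (univ : Finset (ZMod n)))).filter
      (fun z => z.1.1 ≠ z.1.2) with hI
  set A : (Finset (ZMod n) × Finset (ZMod n)) × ZMod n × ZMod n →
      Finset (Equiv.Perm (ZMod n)) :=
    fun z => univ.filter (fun π =>
      ({π z.2.1, π (z.2.1+1), π (z.2.1+2)} : Finset (ZMod n)) ⊆ z.1.1 ∧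
      ({π z.2.2, π (z.2.2+1), π (z.2.2+2)} : Finset (ZMod n)) ⊆ z.1.2) with hA
  have hcover : Bad ⊆ I.biUnion A := by
    intro π hπ
    obtain ⟨-, p, hp, e, he, f, hf, b, hb, b', hb', hne, heb, hfb'⟩ := mem_filter.mp hπ
    obtain ⟨i, -, hie⟩ := Finset.mem_image.mp he
    obtain ⟨j, -, hjf⟩ := Finset.mem_image.mp hf
    refine Finset.mem_biUnion.mpr ⟨((b, b'), (i, j)), ?_, ?_⟩
    · refine mem_filter.mpr ⟨Finset.mem_product.mpr ⟨?_, ?_⟩, hne⟩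
      · exact Finset.mem_biUnion.mpr ⟨p, hp, Finset.mem_product.mpr ⟨hb, hb'⟩⟩
      · exact Finset.mem_product.mpr ⟨mem_univ _, mem_univ _⟩
    · refine mem_filter.mpr ⟨mem_univ _, ?_, ?_⟩
      · rw [hie]; exact heb
      · rw [hjf]; exact hfb'
  have hAbound : ∀ z ∈ I, (A z).card ≤ (q+1)^6 * Nat.factorial (n-6) := by
    intro z hz
    obtain ⟨hzJ, hzne⟩ := mem_filter.mp hz
    obtain ⟨hz1, -⟩ := Finset.mem_product.mp hzJ
    obtain ⟨p, hp, hbb⟩ := Finset.mem_biUnion.mp hz1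
    obtain ⟨hb, hb'⟩ := Finset.mem_product.mp hbb
    have hdisj := hPdisj p hp _ hb _ hb' hzne
    exact window_card_le n q hn7 z.2.1 z.2.2 z.1.1 z.1.2
      (le_of_eq (hBlcard _ (hPBl p hp _ hb))) (le_of_eq (hBlcard _ (hPBl p hp _ hb'))) hdisj
  have hIcard : I.card ≤ P.card * (k*k) * (n*n) := by
    have h1 : I.card ≤ J.card * (n*n) := by
      calc I.card ≤ (J ×ˢ ((univ : Finset (ZMod n)) ×ˢ (univ : Finset (ZMod n)))).card :=
            card_le_card (filter_subset _ _)
        _ = J.card * (n*n) := by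
            rw [Finset.card_product, Finset.card_product, card_univ, ZMod.card]
    have h2 : J.card ≤ P.card * (k*k) := by
      calc J.card ≤ ∑ p ∈ P, (p ×ˢ p).card := card_biUnion_le
        _ = ∑ p ∈ P, k * k := by
            exact Finset.sum_congr rfl (fun p hp => by rw [Finset.card_product, hPcard p hp])
        _ = P.card * (k*k) := by rw [Finset.sum_const, smul_eq_mul]
    exact h1.trans (Nat.mul_le_mul_right _ h2)
  have hX1 : Bad.card ≤ P.card * (k*k) * (n*n) * ((q+1)^6 * Nat.factorial (n-6)) := by
    calc Bad.card ≤ (I.biUnion A).card := card_le_card hcover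
      _ ≤ ∑ z ∈ I, (A z).card := card_biUnion_le
      _ ≤ I.card • ((q+1)^6 * Nat.factorial (n-6)) := Finset.sum_le_card_nsmul I _ _ hAbound
      _ = I.card * ((q+1)^6 * Nat.factorial (n-6)) := by rw [smul_eq_mul]
      _ ≤ P.card * (k*k) * (n*n) * ((q+1)^6 * Nat.factorial (n-6)) :=
          Nat.mul_le_mul_right _ hIcard
  -- Step 4 : the numeric bound
  have hX2 : (Bad.card * q) * q^3 ≤ (80000 * k * Nat.factorial n) * q^3 := by
    calc (Bad.card * q) * q^3 = Bad.card * q^3 * q := by ring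
      _ ≤ (P.card * (k*k) * (n*n) * ((q+1)^6 * Nat.factorial (n-6))) * q^3 * q := by
          exact Nat.mul_le_mul_right _ (Nat.mul_le_mul_right _ hX1)
      _ = ((P.card * k) * q^3) * (k * (n*n) * ((q+1)^6 * Nat.factorial (n-6))) * q := by ring
      _ ≤ (B * q^3) * (k * (n*n) * ((q+1)^6 * Nat.factorial (n-6))) * q := by
          exact Nat.mul_le_mul_right _ (Nat.mul_le_mul_right _
            (Nat.mul_le_mul_right _ hPk))
      _ ≤ (8 * n^3) * (k * (n*n) * ((q+1)^6 * Nat.factorial (n-6))) * q := by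
          exact Nat.mul_le_mul_right _ (Nat.mul_le_mul_right _ hB3)
      _ = k * ((8 * n^3) * (n^2 * ((q+1)^6 * Nat.factorial (n-6))) * q) := by ring
      _ ≤ k * (80000 * Nat.factorial n * q^3) :=
          Nat.mul_le_mul_left _ (arith_main q n hq hn)
      _ = (80000 * k * Nat.factorial n) * q^3 := by ring
  have hq3pos : 0 < q^3 := pow_pos (by omega) 3
  have hXq : Bad.card * q ≤ 80000 * k * Nat.factorial n :=
    Nat.le_of_mul_le_mul_right hX2 hq3pos
  -- Step 5 : real-number estimates
  have hq0 : (0:ℝ) < (q:ℝ) := by exact_mod_cast (show 0 < q by omega)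
  have hfin : (Bad.card : ℝ) * q ≤ 80000 * k * (Nat.factorial n : ℝ) := by
    exact_mod_cast hXq
  have hq1 : (1:ℝ) ≤ (q:ℝ) := by exact_mod_cast (show 1 ≤ q by omega)
  have h4 : (1:ℝ) ≤ (q:ℝ)^4 := by
    simpa using pow_le_pow_left₀ (by norm_num : (0:ℝ) ≤ 1) hq1 4
  have h1 : (n:ℝ) ≤ ((5/4)*(q:ℝ))^(4:ℕ) := by
    have : (n:ℝ) = (q:ℝ)^4 + 1 := by rw [hn]; push_cast; ring
    rw [this]
    nlinarith [h4]
  have hrpow : (n:ℝ) ^ ((1:ℝ)/4) ≤ (5/4) * (q:ℝ) := by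
    have h2 : ((n:ℝ)) ^ ((1:ℝ)/4) ≤ (((5/4)*(q:ℝ))^(4:ℕ)) ^ ((1:ℝ)/4) :=
      Real.rpow_le_rpow (by positivity) h1 (by norm_num)
    have h3 : (((5/4)*(q:ℝ))^(4:ℕ)) ^ ((1:ℝ)/4) = (5/4)*(q:ℝ) := by
      rw [← Real.rpow_natCast ((5/4)*(q:ℝ)) 4, ← Real.rpow_mul (by positivity)]
      norm_num
    rw [h3] at h2
    exact h2
  have hnpos : (0:ℝ) < (n:ℝ) := by exact_mod_cast (show 0 < n by omega)
  have hn4pos : (0:ℝ) < (n:ℝ) ^ ((1:ℝ)/4) := Real.rpow_pos_of_pos hnpos _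
  have hneg : (n:ℝ) ^ (-(1/4 : ℝ)) = ((n:ℝ) ^ ((1:ℝ)/4))⁻¹ := by
    rw [Real.rpow_neg (le_of_lt hnpos)]
  have hprod : (n:ℝ) ^ (-(1/4 : ℝ)) * (n:ℝ) ^ ((1:ℝ)/4) = 1 := by
    rw [hneg]
    exact inv_mul_cancel₀ (ne_of_gt hn4pos)
  have hq45 : (4/5) * (n:ℝ)^((1:ℝ)/4) ≤ (q:ℝ) := by linarith [hrpow]
  have hfinal : (Bad.card : ℝ) * q ≤
      (100000 * (k:ℝ) * (n:ℝ) ^ (-(1/4 : ℝ)) * (Nat.factorial n : ℝ)) * q := by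
    calc (Bad.card : ℝ) * q ≤ 80000 * k * (Nat.factorial n : ℝ) := hfin
      _ = (100000 * (k:ℝ) * (n:ℝ) ^ (-(1/4 : ℝ)) * (Nat.factorial n : ℝ))
            * ((4/5) * (n:ℝ)^((1:ℝ)/4)) := by
          rw [show (100000 * (k:ℝ) * (n:ℝ) ^ (-(1/4 : ℝ)) * (Nat.factorial n : ℝ))
              * ((4/5) * (n:ℝ)^((1:ℝ)/4))
              = 80000 * (k:ℝ) * (Nat.factorial n : ℝ)
                * ((n:ℝ) ^ (-(1/4 : ℝ)) * (n:ℝ)^((1:ℝ)/4)) by ring, hprod, mul_one]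
      _ ≤ (100000 * (k:ℝ) * (n:ℝ) ^ (-(1/4 : ℝ)) * (Nat.factorial n : ℝ)) * q := by
          refine mul_le_mul_of_nonneg_left hq45 ?_
          have : (0:ℝ) ≤ (n:ℝ) ^ (-(1/4 : ℝ)) := Real.rpow_nonneg (le_of_lt hnpos) _
          positivity
  exact le_of_mul_le_mul_right hfinal hq0
end
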